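/- Let α ∈ ℝ with α ≠ 0 and α ≠ 1, and let f : (0,∞) → ℝ be a differentiable function such that f(b) - f(a) = (b - a)·f'(S_α(a,b)) for all a, b > 0. Then there exist constants c₁, c₂, c₃ ∈ ℝ such that f(x) = c₁·x^α + c₂·x + c₃ for all x > 0. -/

import Mathlib

open Real Set Filter Topology

/-- The Stolarsky mean with parameter `α` of two positive reals. -/
noncomputable def stolarsky (α a b : ℝ) : ℝ :=
  if a = b then a else ((b ^ α - a ^ α) / (α * (b - a))) ^ (1 / (α - 1))

private lemma Qpos {α a b : ℝ} (hα0 : α ≠ 0) (ha : 0 < a) (hab : a < b) :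
    0 < (b ^ α - a ^ α) / (α * (b - a)) := by
  rcases lt_or_gt_of_ne hα0 with hneg | hpos
  · have h1 : b ^ α < a ^ α := Real.rpow_lt_rpow_of_neg ha hab hneg
    have : α * (b - a) < 0 := mul_neg_of_neg_of_pos hneg (by linarith)
    exact div_pos_of_neg_of_neg (by linarith) this
  · have h1 : a ^ α < b ^ α := Real.rpow_lt_rpow ha.le hab hpos
    exact div_pos (by linarith) (mul_pos hpos (by linarith))

private lemma stolarsky_of_ne {α a b : ℝ} (h : a ≠ b) :
    stolarsky α a b = ((b ^ α - a ^ α) / (α * (b - a))) ^ (1 / (α - 1)) := if_neg h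

private lemma stolarsky_pos {α a b : ℝ} (hα0 : α ≠ 0) (ha : 0 < a) (hab : a < b) :
    0 < stolarsky α a b := by
  rw [stolarsky_of_ne hab.ne]
  exact Real.rpow_pos_of_pos (Qpos hα0 ha hab) _

private lemma stolarsky_homog {α a b t : ℝ} (hα0 : α ≠ 0) (hα1 : α ≠ 1)
    (ha : 0 < a) (hab : a < b) (ht : 0 < t) :
    stolarsky α (t * a) (t * b) = t * stolarsky α a b := by
  have hne : t * a ≠ t * b := by
    intro h
    exact hab.ne (mul_left_cancel₀ ht.ne' h)
  rw [stolarsky_of_ne hne, stolarsky_of_ne hab.ne]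
  have hQ : ((t * b) ^ α - (t * a) ^ α) / (α * (t * b - t * a))
      = t ^ (α - 1) * ((b ^ α - a ^ α) / (α * (b - a))) := by
    rw [Real.mul_rpow ht.le (ha.trans hab).le, Real.mul_rpow ht.le ha.le]
    have h1 : t ^ α = t ^ (α - 1) * t := by
      rw [← Real.rpow_add_one ht.ne' (α - 1)]; ring_nf
    rw [h1]
    have hd1 : α * (t * b - t * a) = t * (α * (b - a)) := by ring
    have hd2 : α * (b - a) ≠ 0 := by
      intro h; rcases mul_eq_zero.mp h with h | h
      · exact hα0 h
      · linarith [sub_ne_zero.mpr hab.ne' ]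
    rw [hd1]
    field_simp
  rw [hQ, Real.mul_rpow (Real.rpow_pos_of_pos ht _).le (Qpos hα0 ha hab).le,
    ← Real.rpow_mul ht.le]
  rw [mul_one_div, div_self (sub_ne_zero.mpr hα1), Real.rpow_one]

private lemma stolarsky_sq {α β : ℝ} (hα0 : α ≠ 0) (hα1 : α ≠ 1) (hβ : 1 < β) :
    stolarsky α 1 (β * β) = stolarsky α 1 β * ((β ^ α + 1) / (β + 1)) ^ (1 / (α - 1)) := by
  have hβ0 : (0:ℝ) < β := by linarith
  have hne1 : (1:ℝ) ≠ β * β := by nlinarith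
  have hne2 : (1:ℝ) ≠ β := hβ.ne
  rw [stolarsky_of_ne hne1, stolarsky_of_ne hne2]
  have hQ1 : (0:ℝ) < (β ^ α - 1 ^ α) / (α * (β - 1)) := Qpos hα0 one_pos hβ
  have hE : (0:ℝ) < (β ^ α + 1) / (β + 1) :=
    div_pos (by positivity) (by linarith)
  rw [← Real.mul_rpow hQ1.le hE.le]
  congr 1
  have hmm : (β * β) ^ α = β ^ α * β ^ α := Real.mul_rpow hβ0.le hβ0.le
  have hBne : β ^ α ≠ 1 := by
    intro h
    rcases lt_or_gt_of_ne hα0 with hneg | hpos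
    · have := Real.rpow_lt_one_of_one_lt_of_neg hβ hneg; linarith
    · have := Real.one_lt_rpow_iff_of_pos hβ0 |>.mpr (Or.inl ⟨hβ, hpos⟩); linarith
  rw [hmm, Real.one_rpow]
  have h1 : β - 1 ≠ 0 := by linarith
  have h2 : β + 1 ≠ 0 := by linarith
  have h3 : β * β - 1 ≠ 0 := by nlinarith
  field_simp
  have h4 : (-1 + β ^ 2 : ℝ) ≠ 0 := by nlinarith
  linear_combination ((β ^ α) ^ 2 - 1) * inv_mul_cancel₀ h4

private noncomputable def dd (α β : ℝ) : ℝ := ((β ^ α + 1) / (β + 1)) ^ (1 / (α - 1))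

private lemma E_pos {α β : ℝ} (hβ : 0 < β) : 0 < (β ^ α + 1) / (β + 1) :=
  div_pos (by positivity) (by linarith)

private lemma dd_pos {α β : ℝ} (hβ : 0 < β) : 0 < dd α β :=
  Real.rpow_pos_of_pos (E_pos hβ) _

private lemma dd_gt_one {α β : ℝ} (hα0 : α ≠ 0) (hα1 : α ≠ 1) (hβ : 1 < β) :
    1 < dd α β := by
  have hβ0 : (0:ℝ) < β := by linarith
  have hE : (0:ℝ) < (β ^ α + 1) / (β + 1) := E_pos hβ0
  rw [dd, Real.one_lt_rpow_iff_of_pos hE]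
  rcases lt_or_gt_of_ne hα1 with hlt | hgt
  · right
    constructor
    · rw [div_lt_one (by linarith : (0:ℝ) < β + 1)]
      have : β ^ α < β ^ (1:ℝ) := (Real.rpow_lt_rpow_left_iff hβ).mpr hlt
      rw [Real.rpow_one] at this; linarith
    · apply div_neg_of_pos_of_neg one_pos; linarith
  · left
    constructor
    · rw [lt_div_iff₀ (by linarith : (0:ℝ) < β + 1)]
      have : β ^ (1:ℝ) < β ^ α := (Real.rpow_lt_rpow_left_iff hβ).mpr hgt
      rw [Real.rpow_one] at this; linarith
    · apply div_pos one_pos; linarith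

private lemma dd_lt_self {α β : ℝ} (hα0 : α ≠ 0) (hα1 : α ≠ 1) (hβ : 1 < β) :
    dd α β < β := by
  have hβ0 : (0:ℝ) < β := by linarith
  have hE : (0:ℝ) < (β ^ α + 1) / (β + 1) := E_pos hβ0
  have hsplit : β ^ (α - 1) * (β + 1) = β ^ α + β ^ (α - 1) := by
    have : β ^ (α - 1) * β = β ^ α := by
      rw [← Real.rpow_add_one hβ0.ne' (α - 1)]; ring_nf
    nlinarith [this]
  have hpow : (β ^ (α - 1)) ^ (1 / (α - 1)) = β := by
    rw [← Real.rpow_mul hβ0.le, mul_one_div, div_self (sub_ne_zero.mpr hα1), Real.rpow_one]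
  rcases lt_or_gt_of_ne hα1 with hlt | hgt
  · -- α < 1 : exponent negative, E > β^(α-1)
    have h1 : β ^ (α - 1) < 1 := by
      apply Real.rpow_lt_one_of_one_lt_of_neg hβ; linarith
    have hEgt : β ^ (α - 1) < (β ^ α + 1) / (β + 1) := by
      rw [lt_div_iff₀ (by linarith : (0:ℝ) < β + 1), hsplit]
      linarith
    calc dd α β < (β ^ (α - 1)) ^ (1 / (α - 1)) := by
          apply Real.rpow_lt_rpow_of_neg (Real.rpow_pos_of_pos hβ0 _) hEgt
          apply div_neg_of_pos_of_neg one_pos; linarith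
      _ = β := hpow
  · -- α > 1 : exponent positive, E < β^(α-1)
    have h1 : 1 < β ^ (α - 1) :=
      (Real.one_lt_rpow_iff_of_pos hβ0).mpr (Or.inl ⟨hβ, by linarith⟩)
    have hElt : (β ^ α + 1) / (β + 1) < β ^ (α - 1) := by
      rw [div_lt_iff₀ (by linarith : (0:ℝ) < β + 1), hsplit]
      linarith
    calc dd α β < (β ^ (α - 1)) ^ (1 / (α - 1)) := by
          apply Real.rpow_lt_rpow hE.le hElt
          apply div_pos one_pos; linarith
      _ = β := hpow

private lemma phi_comb {α β x : ℝ} (hα0 : α ≠ 0) (hα1 : α ≠ 1) (hβ : 1 < β) (hx : 0 < x) :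
    α * (dd α β * x) ^ (α - 1) - α * x ^ (α - 1)
      = (β / (β + 1)) * (α * (β * x) ^ (α - 1) - α * x ^ (α - 1)) := by
  have hβ0 : (0:ℝ) < β := by linarith
  have hE : (0:ℝ) < (β ^ α + 1) / (β + 1) := E_pos hβ0
  have hdd : (dd α β) ^ (α - 1) = (β ^ α + 1) / (β + 1) := by
    rw [dd, ← Real.rpow_mul hE.le, one_div,
      inv_mul_cancel₀ (sub_ne_zero.mpr hα1), Real.rpow_one]
  rw [Real.mul_rpow (dd_pos hβ0).le hx.le, Real.mul_rpow hβ0.le hx.le, hdd]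
  have hba : β ^ (α - 1) * β = β ^ α := by
    rw [← Real.rpow_add_one hβ0.ne' (α - 1)]; ring_nf
  have h2 : β + 1 ≠ 0 := by linarith
  field_simp
  linear_combination -hba

private lemma dd_continuousAt {α L : ℝ} (hL : 0 < L) : ContinuousAt (dd α) L := by
  have h1 : ContinuousAt (fun β : ℝ => (β ^ α + 1) / (β + 1)) L := by
    apply ContinuousAt.div
    · exact (Real.continuousAt_rpow_const L α (Or.inl hL.ne')).add continuousAt_const
    · exact continuousAt_id.add continuousAt_const
    · intro h; linarith
  exact h1.rpow_const (Or.inl (E_pos hL).ne')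

private lemma pdiff_ne {α x y : ℝ} (hα0 : α ≠ 0) (hα1 : α ≠ 1) (hx : 0 < x) (hxy : x < y) :
    α * y ^ (α - 1) - α * x ^ (α - 1) ≠ 0 := by
  have h : x ^ (α - 1) ≠ y ^ (α - 1) := by
    rcases lt_or_gt_of_ne (sub_ne_zero.mpr hα1) with hneg | hpos
    · exact (Real.rpow_lt_rpow_of_neg hx hxy hneg).ne'
    · exact (Real.rpow_lt_rpow hx.le hxy hpos).ne
  intro hc
  apply h
  have := sub_eq_zero.mp hc
  exact (mul_left_cancel₀ hα0 this.symm)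

private noncomputable def nn (α : ℝ) (g : ℝ → ℝ) (x y : ℝ) : ℝ :=
  (g y - g x) / (α * y ^ (α - 1) - α * x ^ (α - 1))

private noncomputable def qq (α : ℝ) (g : ℝ → ℝ) (x : ℝ) : ℝ :=
  deriv g x / (α * ((α - 1) * x ^ (α - 1 - 1)))

private lemma tendsto_nn {α : ℝ} (hα0 : α ≠ 0) (hα1 : α ≠ 1) {g : ℝ → ℝ} {x : ℝ}
    (hx : 0 < x) (hgd : DifferentiableAt ℝ g x) :
    Tendsto (nn α g x) (𝓝[>] x) (𝓝 (qq α g x)) := by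
  have hr : (0:ℝ) < x ^ (α - 1 - 1) := Real.rpow_pos_of_pos hx _
  have h1 : α - 1 ≠ 0 := sub_ne_zero.mpr hα1
  have hD : α * ((α - 1) * x ^ (α - 1 - 1)) ≠ 0 :=
    mul_ne_zero hα0 (mul_ne_zero h1 hr.ne')
  have hp' : HasDerivAt (fun y : ℝ => α * y ^ (α - 1))
      (α * ((α - 1) * x ^ (α - 1 - 1))) x :=
    (Real.hasDerivAt_rpow_const (Or.inl hx.ne')).const_mul α
  have hg' : HasDerivAt g (deriv g x) x := hgd.hasDerivAt
  have t1 := hasDerivAt_iff_tendsto_slope.mp hg'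
  have t2 := hasDerivAt_iff_tendsto_slope.mp hp'
  have t3 : Tendsto (fun y => slope g x y / slope (fun y : ℝ => α * y ^ (α - 1)) x y)
      (𝓝[≠] x) (𝓝 (qq α g x)) := t1.div t2 hD
  have t4 : Tendsto (fun y => slope g x y / slope (fun y : ℝ => α * y ^ (α - 1)) x y)
      (𝓝[>] x) (𝓝 (qq α g x)) :=
    t3.mono_left (nhdsWithin_mono x fun y hy => Set.mem_compl_singleton_iff.mpr (ne_of_gt hy))
  apply Filter.Tendsto.congr' _ t4
  filter_upwards [self_mem_nhdsWithin] with y hy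
  have hyx : y - x ≠ 0 := sub_ne_zero.mpr (ne_of_gt hy)
  rw [slope_def_field, slope_def_field, div_div_div_cancel_right₀ hyx, nn]

private lemma chord_eq {α : ℝ} (hα0 : α ≠ 0) (hα1 : α ≠ 1) {g : ℝ → ℝ}
    (hgd : ∀ x : ℝ, 0 < x → DifferentiableAt ℝ g x)
    (main : ∀ x β : ℝ, 0 < x → 1 < β →
      g (dd α β * x) - g x = (β / (β + 1)) * (g (β * x) - g x))
    {x β : ℝ} (hx : 0 < x) (hβ : 1 < β) :
    nn α g x (β * x) = qq α g x := by
  set b : ℕ → ℝ := fun k => (dd α)^[k] β with hbdef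
  have hbs : ∀ k, b (k + 1) = dd α (b k) := fun k => Function.iterate_succ_apply' (dd α) k β
  have hb1 : ∀ k, 1 < b k := by
    intro k; induction k with
    | zero => exact hβ
    | succ k ih => rw [hbs]; exact dd_gt_one hα0 hα1 ih
  have hdec : ∀ k, b (k + 1) < b k := fun k => by rw [hbs]; exact dd_lt_self hα0 hα1 (hb1 k)
  have hanti : Antitone b := antitone_nat_of_succ_le fun k => (hdec k).le
  have hbdd : BddBelow (Set.range b) := ⟨1, by rintro _ ⟨k, rfl⟩; exact (hb1 k).le⟩
  have hlimL : Tendsto b atTop (𝓝 (⨅ k, b k)) := tendsto_atTop_ciInf hanti hbdd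
  have hL1 : 1 ≤ ⨅ k, b k := le_ciInf fun k => (hb1 k).le
  have hL : (⨅ k, b k) = 1 := by
    by_contra hne
    have hLgt : 1 < ⨅ k, b k := lt_of_le_of_ne hL1 (Ne.symm hne)
    have hc := (dd_continuousAt (α := α) (by linarith : (0:ℝ) < ⨅ k, b k)).tendsto.comp hlimL
    have hshift : Tendsto (fun k => b (k + 1)) atTop (𝓝 (⨅ k, b k)) :=
      hlimL.comp (tendsto_add_atTop_nat 1)
    have h2 : Tendsto (fun k => b (k + 1)) atTop (𝓝 (dd α (⨅ k, b k))) := by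
      have : (fun k => dd α (b k)) = fun k => b (k + 1) := by
        funext k; rw [hbs]
      rw [← this]; exact hc
    have heq := tendsto_nhds_unique hshift h2
    have := dd_lt_self hα0 hα1 hLgt
    linarith
  have hval : ∀ k, nn α g x (b k * x) = nn α g x (β * x) := by
    intro k; induction k with
    | zero => rfl
    | succ k ih =>
      rw [← ih, hbs]
      have h1 := main x (b k) hx (hb1 k)
      have h2 := phi_comb (x := x) hα0 hα1 (hb1 k) hx
      have hw : b k / (b k + 1) ≠ 0 := by
        have := hb1 k
        apply div_ne_zero <;> linarith
      simp only [nn]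
      rw [h1, h2, mul_div_mul_left _ _ hw]
  have hyn : Tendsto (fun k => b k * x) atTop (𝓝[>] x) := by
    apply tendsto_nhdsWithin_of_tendsto_nhds_of_eventually_within
    · have h3 := hlimL.mul_const x
      rw [hL, one_mul] at h3
      exact h3
    · filter_upwards with k
      have := hb1 k
      exact Set.mem_Ioi.mpr (by nlinarith)
  have hcomp : Tendsto (fun k => nn α g x (b k * x)) atTop (𝓝 (qq α g x)) :=
    (tendsto_nn hα0 hα1 hx (hgd x hx)).comp hyn
  have hconst : Tendsto (fun k => nn α g x (b k * x)) atTop (𝓝 (nn α g x (β * x))) := by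
    simp only [hval]; exact tendsto_const_nhds
  exact tendsto_nhds_unique hconst hcomp

private lemma g_form {α : ℝ} (hα0 : α ≠ 0) (hα1 : α ≠ 1) {g : ℝ → ℝ}
    (hgd : ∀ x : ℝ, 0 < x → DifferentiableAt ℝ g x)
    (main : ∀ x β : ℝ, 0 < x → 1 < β →
      g (dd α β * x) - g x = (β / (β + 1)) * (g (β * x) - g x)) :
    ∃ c₁ c₂ : ℝ, ∀ x : ℝ, 0 < x → g x = c₁ * (α * x ^ (α - 1)) + c₂ := by
  have haff : ∀ x y : ℝ, 0 < x → x < y →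
      g y - g x = qq α g x * (α * y ^ (α - 1) - α * x ^ (α - 1)) := by
    intro x y hx hxy
    have hβ : 1 < y / x := (one_lt_div hx).mpr hxy
    have h := chord_eq hα0 hα1 hgd main hx hβ
    rw [div_mul_cancel₀ y hx.ne'] at h
    rw [← h, nn, div_mul_cancel₀]
    exact pdiff_ne hα0 hα1 hx hxy
  have hqc : ∀ x y : ℝ, 0 < x → x < y → qq α g x = qq α g y := by
    intro x y hx hxy
    have hy : 0 < y := hx.trans hxy
    have h1 := haff x y hx hxy
    have h2 := haff x (2 * y) hx (by linarith)
    have h3 := haff y (2 * y) hy (by linarith : y < 2 * y)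
    have hne := pdiff_ne hα0 hα1 hy (by linarith : y < 2 * y)
    apply mul_right_cancel₀ hne
    linear_combination h1 + h3 - h2
  refine ⟨qq α g 1, g 1 - qq α g 1 * α, ?_⟩
  intro x hx
  rcases lt_trichotomy x 1 with h | h | h
  · have h1 := haff x 1 hx h
    rw [hqc x 1 hx h, Real.one_rpow] at h1
    linear_combination -h1
  · rw [h, Real.one_rpow]; ring
  · have h1 := haff 1 x one_pos h
    rw [Real.one_rpow] at h1
    linear_combination h1

theorem stmt_0 (α : ℝ) (hα0 : α ≠ 0) (hα1 : α ≠ 1) (f : ℝ → ℝ)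
    (hdiff : ∀ x ∈ Set.Ioi (0 : ℝ), DifferentiableAt ℝ f x)
    (hfde : ∀ a ∈ Set.Ioi (0 : ℝ), ∀ b ∈ Set.Ioi (0 : ℝ),
      f b - f a = (b - a) * deriv f (stolarsky α a b)) :
    ∃ c₁ c₂ c₃ : ℝ, ∀ x ∈ Set.Ioi (0 : ℝ), f x = c₁ * x ^ α + c₂ * x + c₃ := by
  have key : ∀ t β : ℝ, 0 < t → 1 < β →
      f (β * t) - f t = t * (β - 1) * deriv f (t * stolarsky α 1 β) := by
    intro t β ht hβ
    have hbt : (0:ℝ) < β * t := by nlinarith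
    have h := hfde t (Set.mem_Ioi.mpr ht) (β * t) (Set.mem_Ioi.mpr hbt)
    have hs : stolarsky α t (β * t) = t * stolarsky α 1 β := by
      have h2 := stolarsky_homog (α := α) hα0 hα1 one_pos hβ ht
      rw [mul_one] at h2
      rw [mul_comm β t, h2]
    rw [h, hs]; ring
  have main : ∀ x β : ℝ, 0 < x → 1 < β →
      deriv f (dd α β * x) - deriv f x
        = (β / (β + 1)) * (deriv f (β * x) - deriv f x) := by
    intro x β hx hβ
    have hβ0 : (0:ℝ) < β := by linarith
    have hs₁ : 0 < stolarsky α 1 β := stolarsky_pos hα0 one_pos hβ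
    have ht : 0 < x / stolarsky α 1 β := div_pos hx hs₁
    have hts : x / stolarsky α 1 β * stolarsky α 1 β = x := div_mul_cancel₀ x hs₁.ne'
    have hββ : 1 < β * β := by nlinarith
    have e1 := key (x / stolarsky α 1 β) β ht hβ
    rw [hts] at e1
    have e2 := key (β * (x / stolarsky α 1 β)) β (by positivity) hβ
    have h7 : β * (x / stolarsky α 1 β) * stolarsky α 1 β = β * x := by
      rw [mul_assoc, hts]
    rw [h7] at e2
    rw [← mul_assoc β β] at e2
    have e3 := key (x / stolarsky α 1 β) (β * β) ht hββ
    rw [stolarsky_sq hα0 hα1 hβ] at e3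
    have h6 : x / stolarsky α 1 β * (stolarsky α 1 β * ((β ^ α + 1) / (β + 1)) ^ (1 / (α - 1)))
        = dd α β * x := by
      rw [← mul_assoc, hts, dd]; ring
    rw [h6] at e3
    have h4 : (β * β - 1) * deriv f (dd α β * x)
        = (β - 1) * deriv f x + β * (β - 1) * deriv f (β * x) := by
      apply mul_left_cancel₀ ht.ne'
      linear_combination e1 + e2 - e3
    have hβ1 : β - 1 ≠ 0 := by linarith
    have h5 : (β + 1) * deriv f (dd α β * x) = deriv f x + β * deriv f (β * x) := by
      apply mul_left_cancel₀ hβ1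
      linear_combination h4
    have hβ2 : β + 1 ≠ 0 := by linarith
    field_simp
    rw [mul_comm x β]
    linear_combination h5
  have hgdiff : ∀ x : ℝ, 0 < x → DifferentiableAt ℝ (deriv f) x := by
    intro x hx
    have hs₀ : 0 < stolarsky α 1 2 := stolarsky_pos hα0 one_pos one_lt_two
    have heq : deriv f =ᶠ[𝓝 x]
        fun y => (f (2 * (y / stolarsky α 1 2)) - f (y / stolarsky α 1 2))
          / (y / stolarsky α 1 2) := by
      filter_upwards [Ioi_mem_nhds hx] with y hy
      have hy0 : (0:ℝ) < y := hy
      have ht : (0:ℝ) < y / stolarsky α 1 2 := div_pos hy0 hs₀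
      have h := key (y / stolarsky α 1 2) 2 ht one_lt_two
      have hys : y / stolarsky α 1 2 * stolarsky α 1 2 = y :=
        div_mul_cancel₀ y hs₀.ne'
      rw [hys] at h
      rw [eq_div_iff ht.ne']
      linarith
    have hdr : DifferentiableAt ℝ
        (fun y => (f (2 * (y / stolarsky α 1 2)) - f (y / stolarsky α 1 2))
          / (y / stolarsky α 1 2)) x := by
      have h1 : DifferentiableAt ℝ (fun y : ℝ => y / stolarsky α 1 2) x :=
        differentiableAt_id.div_const _
      have h2 : DifferentiableAt ℝ (fun y : ℝ => 2 * (y / stolarsky α 1 2)) x :=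
        h1.const_mul 2
      have hx1 : (0:ℝ) < x / stolarsky α 1 2 := div_pos hx hs₀
      have hf1 : DifferentiableAt ℝ (fun y : ℝ => f (2 * (y / stolarsky α 1 2))) x :=
        (hdiff _ (Set.mem_Ioi.mpr (by positivity))).comp x h2
      have hf2 : DifferentiableAt ℝ (fun y : ℝ => f (y / stolarsky α 1 2)) x :=
        (hdiff _ (Set.mem_Ioi.mpr hx1)).comp x h1
      exact (hf1.sub hf2).div h1 hx1.ne'
    exact hdr.congr_of_eventuallyEq heq
  obtain ⟨c₁, c₂, hg⟩ := g_form hα0 hα1 hgdiff main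
  refine ⟨c₁, c₂, f 1 - c₁ - c₂, ?_⟩
  have hder : ∀ y : ℝ, 0 < y →
      HasDerivAt (fun z : ℝ => f z - c₁ * z ^ α - c₂ * z) 0 y := by
    intro y hy
    have h1 : HasDerivAt f (deriv f y) y := (hdiff y (Set.mem_Ioi.mpr hy)).hasDerivAt
    have h2 : HasDerivAt (fun z : ℝ => z ^ α) (α * y ^ (α - 1)) y :=
      Real.hasDerivAt_rpow_const (Or.inl hy.ne')
    have h3 : HasDerivAt (fun z : ℝ => f z - c₁ * z ^ α - c₂ * z)
        (deriv f y - c₁ * (α * y ^ (α - 1)) - c₂ * 1) y :=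
      (h1.sub (h2.const_mul c₁)).sub ((hasDerivAt_id y).const_mul c₂)
    have h4 : deriv f y - c₁ * (α * y ^ (α - 1)) - c₂ * 1 = 0 := by
      rw [hg y hy]; ring
    rw [h4] at h3
    exact h3
  have hconst : ∀ u v : ℝ, 0 < u → u ≤ v →
      f v - c₁ * v ^ α - c₂ * v = f u - c₁ * u ^ α - c₂ * u := by
    intro u v hu huv
    have h := constant_of_has_deriv_right_zero
      (f := fun z : ℝ => f z - c₁ * z ^ α - c₂ * z) (a := u) (b := v)
      (fun z hz => ((hder z (lt_of_lt_of_le hu hz.1)).continuousAt).continuousWithinAt)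
      (fun z hz => (hder z (lt_of_lt_of_le hu hz.1)).hasDerivWithinAt)
    exact h v (Set.right_mem_Icc.mpr huv)
  intro x hx
  have hx0 : (0:ℝ) < x := hx
  have h1 : f x - c₁ * x ^ α - c₂ * x = f 1 - c₁ * 1 ^ α - c₂ * 1 := by
    rcases le_total x 1 with h | h
    · exact (hconst x 1 hx0 h).symm
    · exact hconst 1 x one_pos h
  rw [Real.one_rpow] at h1
  linarith
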